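/- Let α > 0, β ≠ 0, δ ∈ ℝ. Then the discriminant of the quadratic polynomial p(σ) = σ² − ((α + 1)β² + δ)/(αβ²) · σ + δ/(αβ²), namely (α + 1)²β⁴ − 2(α − 1)β²δ + δ² (up to the positive factor 1/(αβ²)²), is strictly positive for every real δ. Consequently p(σ) always has two distinct real roots. -/

import Mathlib

/-- For `α > 0`, `β ≠ 0` and every real `δ`, the discriminant
`(α+1)²β⁴ − 2(α−1)β²δ + δ²` of `p(σ) = σ² − ((α+1)β² + δ)/(αβ²) σ + δ/(αβ²)` is strictly
positive; consequently `p` always has two distinct real roots. -/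
theorem discriminant_positive (α β : ℝ) (hα : 0 < α) (hβ : β ≠ 0) (δ : ℝ) :
    0 < (α + 1) ^ 2 * β ^ 4 - 2 * (α - 1) * β ^ 2 * δ + δ ^ 2 ∧
    ∃ σ₁ σ₂ : ℝ, σ₁ ≠ σ₂ ∧
      σ₁ ^ 2 - ((α + 1) * β ^ 2 + δ) / (α * β ^ 2) * σ₁ + δ / (α * β ^ 2) = 0 ∧
      σ₂ ^ 2 - ((α + 1) * β ^ 2 + δ) / (α * β ^ 2) * σ₂ + δ / (α * β ^ 2) = 0 := by
  have hb2 : (0:ℝ) < β ^ 2 := by positivity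
  have hD : 0 < (α + 1) ^ 2 * β ^ 4 - 2 * (α - 1) * β ^ 2 * δ + δ ^ 2 := by
    nlinarith [sq_nonneg (δ - (α - 1) * β ^ 2), sq_nonneg (β ^ 2), mul_pos hα (pow_pos hb2 2)]
  refine ⟨hD, ?_⟩
  set B := ((α + 1) * β ^ 2 + δ) / (α * β ^ 2) with hB
  set C := δ / (α * β ^ 2) with hC
  have hab : α * β ^ 2 ≠ 0 := by positivity
  have hdisc : 0 < B ^ 2 - 4 * C := by
    have h1 : B ^ 2 - 4 * C =
        ((α + 1) ^ 2 * β ^ 4 - 2 * (α - 1) * β ^ 2 * δ + δ ^ 2) / (α * β ^ 2) ^ 2 := by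
      rw [hB, hC]
      field_simp [hB, hC]
      ring
    rw [h1]
    positivity
  set s := Real.sqrt (B ^ 2 - 4 * C) with hs
  have hs2 : s ^ 2 = B ^ 2 - 4 * C := Real.sq_sqrt hdisc.le
  have hspos : 0 < s := Real.sqrt_pos.mpr hdisc
  refine ⟨(B + s) / 2, (B - s) / 2, ?_, by nlinarith, by nlinarith⟩
  intro h
  nlinarith
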